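/- Let P be a non-trivial product distribution on {0,1}^n (independent coordinates with 0 < p_j = Pr[z_j = 1] < 1 for all j). For each ℓ ∈ {0,1,...,n}, let P_ℓ be the distribution of z ∼ P conditioned on |z| = ℓ, viewed as a distribution on subsets of [n] of size ℓ. Then there exists a probability distribution on maximal chains ∅ = c_0 ⊂ c_1 ⊂ ... ⊂ c_n = [n] of subsets of [n] (with |c_ℓ| = ℓ for each ℓ) such that for every ℓ ∈ {0,1,...,n}, the random set c_ℓ is distributed according to P_ℓ. -/

import Mathlib

open Finset

/-- The probability that a sample from the product distribution on `{0,1}^n`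
with parameters `p` equals the indicator vector of the set `s ⊆ [n]`. -/
def prodWeight {n : ℕ} (p : Fin n → ℝ) (s : Finset (Fin n)) : ℝ :=
  (∏ j ∈ s, p j) * ∏ j ∈ sᶜ, (1 - p j)

/-- The conditioned measure `P_ℓ`: the probability, under the product distribution
with parameters `p` conditioned on `|z| = ℓ`, of the set `s` (it is `0` unless
`|s| = ℓ`). -/
noncomputable def condWeight {n : ℕ} (p : Fin n → ℝ) (ℓ : ℕ) (s : Finset (Fin n)) : ℝ :=
  (if s.card = ℓ then prodWeight p s else 0) /
    ∑ u ∈ Finset.univ.filter (fun u : Finset (Fin n) => u.card = ℓ), prodWeight p u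


section aux

variable {n : ℕ} {r : Fin n → ℝ}

noncomputable def Wt (r : Fin n → ℝ) (s : Finset (Fin n)) : ℝ := ∏ j ∈ s, r j

noncomputable def esym (r : Fin n → ℝ) (A : Finset (Fin n)) (k : ℕ) : ℝ :=
  ∑ s ∈ Finset.powersetCard k A, Wt r s

lemma Wt_pos (hr : ∀ j, 0 < r j) (s : Finset (Fin n)) : 0 < Wt r s :=
  Finset.prod_pos fun j _ => hr j

lemma Wt_insert {a : Fin n} {s : Finset (Fin n)} (ha : a ∉ s) :
    Wt r (insert a s) = r a * Wt r s := Finset.prod_insert ha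

lemma esym_zero (A : Finset (Fin n)) : esym r A 0 = 1 := by
  simp [esym, Wt]

lemma esym_nonneg (hr : ∀ j, 0 < r j) (A : Finset (Fin n)) (k : ℕ) : 0 ≤ esym r A k :=
  Finset.sum_nonneg fun s _ => (Wt_pos hr s).le

lemma esym_pos (hr : ∀ j, 0 < r j) {A : Finset (Fin n)} {k : ℕ} (h : k ≤ A.card) :
    0 < esym r A k :=
  Finset.sum_pos (fun s _ => Wt_pos hr s) (Finset.powersetCard_nonempty.2 h)

lemma esym_of_lt {A : Finset (Fin n)} {k : ℕ} (h : A.card < k) : esym r A k = 0 := by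
  rw [esym, Finset.powersetCard_eq_empty.2 h, Finset.sum_empty]

lemma esym_insert {a : Fin n} {A : Finset (Fin n)} (ha : a ∉ A) (k : ℕ) :
    esym r (insert a A) (k + 1) = esym r A (k + 1) + r a * esym r A k := by
  rw [esym, Finset.powersetCard_succ_insert ha, Finset.sum_union, Finset.sum_image]
  · rw [esym, esym, Finset.mul_sum]
    congr 1
    refine Finset.sum_congr rfl fun s hs => ?_
    have has : a ∉ s := fun h => ha ((Finset.mem_powersetCard.1 hs).1 h)
    exact Wt_insert has
  · intro s hs t ht hst
    have has : a ∉ s := fun h => ha ((Finset.mem_powersetCard.1 hs).1 h)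
    have hat : a ∉ t := fun h => ha ((Finset.mem_powersetCard.1 ht).1 h)
    have := congrArg (Finset.erase · a) hst
    simpa [Finset.erase_insert, has, hat] using this
  · rw [Finset.disjoint_left]
    intro s hs hs'
    obtain ⟨t, ht, rfl⟩ := Finset.mem_image.1 hs'
    exact ha ((Finset.mem_powersetCard.1 hs).1 (Finset.mem_insert_self a t))

lemma newton (hr : ∀ j, 0 < r j) (A : Finset (Fin n)) :
    ∀ k : ℕ, esym r A k * esym r A (k + 2) ≤ esym r A (k + 1) * esym r A (k + 1) := by
  induction A using Finset.induction_on with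
  | empty =>
    intro k
    rw [esym_of_lt (k := k + 1) (by simp), esym_of_lt (k := k + 2) (by simp)]
    simp
  | @insert a A ha IH =>
    have mid : ∀ k, esym r A k * esym r A (k + 3) ≤ esym r A (k + 1) * esym r A (k + 2) := by
      intro k
      by_cases h : k + 3 ≤ A.card
      · have p1 : 0 < esym r A (k + 1) := esym_pos hr (by omega)
        have p2 : 0 < esym r A (k + 2) := esym_pos hr (by omega)
        have h1 := mul_le_mul (IH k) (IH (k + 1))
          (mul_nonneg (esym_nonneg hr A (k + 1)) (esym_nonneg hr A (k + 3)))
          (mul_nonneg (esym_nonneg hr A (k + 1)) (esym_nonneg hr A (k + 1)))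
        nlinarith [mul_pos p1 p2, esym_nonneg hr A k, esym_nonneg hr A (k + 3)]
      · rw [esym_of_lt (k := k + 3) (by omega)]
        rw [mul_zero]
        exact mul_nonneg (esym_nonneg hr A (k + 1)) (esym_nonneg hr A (k + 2))
    intro k
    match k with
    | 0 =>
      rw [esym_zero, one_mul, esym_insert ha 1, esym_insert ha 0, esym_zero, mul_one]
      have h0 := IH 0
      rw [esym_zero, one_mul] at h0
      nlinarith [hr a, esym_nonneg hr A 1]
    | (k + 1) =>
      have h3 : esym r (insert a A) (k + 1 + 2) = esym r A (k + 1 + 2) + r a * esym r A (k + 2) :=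
        esym_insert ha (k + 2)
      rw [esym_insert ha k, esym_insert ha (k + 1), h3]
      nlinarith [IH (k + 1), mul_le_mul_of_nonneg_left (mid k) (hr a).le,
        mul_le_mul_of_nonneg_left (IH k) (mul_nonneg (hr a).le (hr a).le)]


lemma sum_mem_erase (a : Fin n) (g : Finset (Fin n) → ℝ) :
    ∑ t ∈ (univ : Finset (Finset (Fin n))).filter (fun t => a ∈ t), g (t.erase a)
      = ∑ t ∈ (univ : Finset (Finset (Fin n))).filter (fun t => a ∉ t), g t := by
  refine Finset.sum_nbij' (fun t : Finset (Fin n) => t.erase a)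
    (fun t : Finset (Fin n) => insert a t) ?_ ?_ ?_ ?_ ?_
  · intro t ht; simp
  · intro t ht; simp at ht ⊢
  · intro t ht; simp at ht; exact Finset.insert_erase ht
  · intro t ht; simp at ht; exact Finset.erase_insert ht
  · intro t ht; rfl

lemma flow_exists (hr : ∀ j, 0 < r j) (A : Finset (Fin n)) :
    ∃ F : ℕ → Finset (Fin n) → Finset (Fin n) → ℝ,
      (∀ ℓ s t, 0 ≤ F ℓ s t) ∧
      (∀ ℓ s t, F ℓ s t ≠ 0 → s ⊆ t ∧ t ⊆ A ∧ s.card = ℓ ∧ t.card = ℓ + 1) ∧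
      (∀ ℓ s, s ⊆ A → s.card = ℓ → ℓ < A.card →
        ∑ t, F ℓ s t = Wt r s / esym r A ℓ) ∧
      (∀ ℓ t, t ⊆ A → t.card = ℓ + 1 →
        ∑ s, F ℓ s t = Wt r t / esym r A (ℓ + 1)) := by
  induction A using Finset.induction_on with
  | empty =>
    refine ⟨fun _ _ _ => 0, fun _ _ _ => le_rfl, fun ℓ s t h => absurd rfl h, ?_, ?_⟩
    · intro ℓ s hs hc hlt; simp at hlt
    · intro ℓ t ht hc
      rw [Finset.subset_empty.1 ht] at hc
      simp at hc
  | @insert a A ha IH =>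
    obtain ⟨F, hF0, hFs, hFr, hFc⟩ := IH
    have hcard : (insert a A).card = A.card + 1 := card_insert_of_notMem ha
    have epos : ∀ {k : ℕ}, k ≤ A.card → 0 < esym r A k := fun h => esym_pos hr h
    have Epos : ∀ {k : ℕ}, k ≤ A.card + 1 → 0 < esym r (insert a A) k := fun h =>
      esym_pos hr (le_trans h (le_of_eq hcard.symm))
    have ccnn : ∀ ℓ : ℕ, ℓ ≤ A.card →
        0 ≤ 1 / esym r (insert a A) ℓ -
          esym r A (ℓ + 1) / (esym r A ℓ * esym r (insert a A) (ℓ + 1)) := by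
      intro ℓ hℓ
      have h1 : 0 < esym r A ℓ := epos hℓ
      have h2 : 0 < esym r (insert a A) ℓ := Epos (by omega)
      have h3 : 0 < esym r (insert a A) (ℓ + 1) := Epos (by omega)
      have key : esym r A (ℓ + 1) * esym r (insert a A) ℓ ≤
          esym r A ℓ * esym r (insert a A) (ℓ + 1) := by
        match ℓ with
        | 0 =>
          rw [esym_zero, esym_zero, esym_insert ha 0, esym_zero]
          nlinarith [hr a]
        | (m + 1) =>
          rw [esym_insert ha m, esym_insert ha (m + 1)]
          nlinarith [newton hr A m, hr a, esym_nonneg hr A m, esym_nonneg hr A (m + 1),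
            esym_nonneg hr A (m + 2)]
      rw [sub_nonneg, div_le_div_iff₀ (by positivity) h2]
      nlinarith [key]
    refine ⟨fun ℓ s t =>
      if a ∈ s then
        (if a ∈ t ∧ 1 ≤ ℓ then
          (r a * esym r A (ℓ - 1) / esym r (insert a A) ℓ) * F (ℓ - 1) (s.erase a) (t.erase a)
        else 0)
      else if a ∈ t then
        (if s ⊆ A ∧ s.card = ℓ ∧ t = insert a s then
          (1 / esym r (insert a A) ℓ -
            esym r A (ℓ + 1) / (esym r A ℓ * esym r (insert a A) (ℓ + 1))) * Wt r s
        else 0)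
      else (esym r A (ℓ + 1) / esym r (insert a A) (ℓ + 1)) * F ℓ s t, ?_, ?_, ?_, ?_⟩
    · -- nonnegativity
      intro ℓ s t
      dsimp only
      split_ifs with h1 h2 h3 h4
      · exact mul_nonneg (div_nonneg (mul_nonneg (hr a).le (esym_nonneg hr A _))
          (esym_nonneg hr (insert a A) _)) (hF0 _ _ _)
      · exact le_rfl
      · exact mul_nonneg (ccnn ℓ (h4.2.1 ▸ card_le_card h4.1)) (Wt_pos hr s).le
      · exact le_rfl
      · exact mul_nonneg (div_nonneg (esym_nonneg hr A _) (esym_nonneg hr (insert a A) _))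
          (hF0 _ _ _)
    · -- support
      intro ℓ s t hne
      dsimp only at hne
      split_ifs at hne with h1 h2 h3 h4
      · have hF := (mul_ne_zero_iff.1 hne).2
        obtain ⟨hst, htA, hsc, htc⟩ := hFs _ _ _ hF
        have hsa : 1 ≤ s.card := Finset.card_pos.2 ⟨a, h1⟩
        have hta : 1 ≤ t.card := Finset.card_pos.2 ⟨a, h2.1⟩
        have hsc' : s.card - 1 = ℓ - 1 := by rwa [card_erase_of_mem h1] at hsc
        have htc' : t.card - 1 = ℓ - 1 + 1 := by rwa [card_erase_of_mem h2.1] at htc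
        refine ⟨?_, Finset.subset_insert_iff.2 htA, by omega, by omega⟩
        intro x hx
        by_cases hxa : x = a
        · exact hxa ▸ h2.1
        · exact Finset.mem_of_mem_erase (hst (Finset.mem_erase.2 ⟨hxa, hx⟩))
      · exact absurd rfl hne
      · obtain ⟨hsA, hsc, rfl⟩ := h4
        exact ⟨Finset.subset_insert a s, Finset.insert_subset_insert a hsA,
          hsc, by rw [card_insert_of_notMem h1, hsc]⟩
      · exact absurd rfl hne
      · have hF := (mul_ne_zero_iff.1 hne).2
        obtain ⟨hst, htA, hsc, htc⟩ := hFs _ _ _ hF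
        exact ⟨hst, htA.trans (Finset.subset_insert a A), hsc, htc⟩
    · -- row sums
      intro ℓ s hsub hscard hlt
      dsimp only
      rw [hcard] at hlt
      by_cases has : a ∈ s
      · have hs' : s.erase a ⊆ A := Finset.subset_insert_iff.1 hsub
        have h1ℓ : 1 ≤ ℓ := hscard ▸ Finset.card_pos.2 ⟨a, has⟩
        have hs'c : (s.erase a).card = ℓ - 1 := by rw [card_erase_of_mem has, hscard]
        have hWs : Wt r s = r a * Wt r (s.erase a) := by
          rw [← Wt_insert (notMem_erase a s), insert_erase has]
        have hepos : (0:ℝ) < esym r A (ℓ - 1) := epos (by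
          have := card_le_card hs'; omega)
        have hll : ℓ - 1 < A.card := by
          have := card_le_card hs'; omega
        calc ∑ t, (if a ∈ s then
              (if a ∈ t ∧ 1 ≤ ℓ then
                (r a * esym r A (ℓ - 1) / esym r (insert a A) ℓ) * F (ℓ - 1) (s.erase a) (t.erase a)
              else 0)
            else if a ∈ t then
              (if s ⊆ A ∧ s.card = ℓ ∧ t = insert a s then
                (1 / esym r (insert a A) ℓ -
                  esym r A (ℓ + 1) / (esym r A ℓ * esym r (insert a A) (ℓ + 1))) * Wt r s
              else 0)
            else (esym r A (ℓ + 1) / esym r (insert a A) (ℓ + 1)) * F ℓ s t)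
            = ∑ t : Finset (Fin n), (if a ∈ t then
              (r a * esym r A (ℓ - 1) / esym r (insert a A) ℓ) * F (ℓ - 1) (s.erase a) (t.erase a)
              else 0) := by
              refine Finset.sum_congr rfl fun t _ => ?_
              simp [has, h1ℓ]
          _ = ∑ t ∈ (univ : Finset (Finset (Fin n))).filter (fun t => a ∈ t),
              (r a * esym r A (ℓ - 1) / esym r (insert a A) ℓ) * F (ℓ - 1) (s.erase a) (t.erase a) := by
            rw [Finset.sum_filter]
          _ = (r a * esym r A (ℓ - 1) / esym r (insert a A) ℓ) *
              ∑ t ∈ (univ : Finset (Finset (Fin n))).filter (fun t => a ∈ t),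
                F (ℓ - 1) (s.erase a) (t.erase a) := by
            rw [Finset.mul_sum]
          _ = (r a * esym r A (ℓ - 1) / esym r (insert a A) ℓ) *
              ∑ t ∈ (univ : Finset (Finset (Fin n))).filter (fun t => a ∉ t),
                F (ℓ - 1) (s.erase a) t := by
            rw [sum_mem_erase]
          _ = (r a * esym r A (ℓ - 1) / esym r (insert a A) ℓ) *
              ∑ t, F (ℓ - 1) (s.erase a) t := by
            rw [Finset.sum_filter_of_ne]
            intro t _ hFne hat
            exact ha ((hFs _ _ _ hFne).2.1 hat)
          _ = Wt r s / esym r (insert a A) ℓ := by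
            rw [hFr _ _ hs' hs'c hll, hWs]
            have hE : (0:ℝ) < esym r (insert a A) ℓ := Epos (by omega)
            field_simp [hepos.ne', hE.ne']
      · have hsA : s ⊆ A := (Finset.subset_insert_iff_of_notMem has).1 hsub
        have step : ∑ t, (if a ∈ s then
              (if a ∈ t ∧ 1 ≤ ℓ then
                (r a * esym r A (ℓ - 1) / esym r (insert a A) ℓ) * F (ℓ - 1) (s.erase a) (t.erase a)
              else 0)
            else if a ∈ t then
              (if s ⊆ A ∧ s.card = ℓ ∧ t = insert a s then
                (1 / esym r (insert a A) ℓ -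
                  esym r A (ℓ + 1) / (esym r A ℓ * esym r (insert a A) (ℓ + 1))) * Wt r s
              else 0)
            else (esym r A (ℓ + 1) / esym r (insert a A) (ℓ + 1)) * F ℓ s t)
            = (1 / esym r (insert a A) ℓ -
                  esym r A (ℓ + 1) / (esym r A ℓ * esym r (insert a A) (ℓ + 1))) * Wt r s
              + (esym r A (ℓ + 1) / esym r (insert a A) (ℓ + 1)) * ∑ t, F ℓ s t := by
          have e1 : ∑ t, (if a ∈ s then
              (if a ∈ t ∧ 1 ≤ ℓ then
                (r a * esym r A (ℓ - 1) / esym r (insert a A) ℓ) * F (ℓ - 1) (s.erase a) (t.erase a)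
              else 0)
            else if a ∈ t then
              (if s ⊆ A ∧ s.card = ℓ ∧ t = insert a s then
                (1 / esym r (insert a A) ℓ -
                  esym r A (ℓ + 1) / (esym r A ℓ * esym r (insert a A) (ℓ + 1))) * Wt r s
              else 0)
            else (esym r A (ℓ + 1) / esym r (insert a A) (ℓ + 1)) * F ℓ s t)
            = ∑ t, (if a ∈ t then
              (if t = insert a s then
                (1 / esym r (insert a A) ℓ -
                  esym r A (ℓ + 1) / (esym r A ℓ * esym r (insert a A) (ℓ + 1))) * Wt r s
              else 0)
            else (esym r A (ℓ + 1) / esym r (insert a A) (ℓ + 1)) * F ℓ s t) := by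
            refine Finset.sum_congr rfl fun t _ => ?_
            simp only [has, if_false, hsA, hscard, true_and]
          rw [e1, Finset.sum_ite]
          congr 1
          · rw [Finset.sum_ite_eq' (Finset.filter (fun t => a ∈ t) univ) (insert a s)
              (fun _ => (1 / esym r (insert a A) ℓ -
                  esym r A (ℓ + 1) / (esym r A ℓ * esym r (insert a A) (ℓ + 1))) * Wt r s)]
            simp
          · rw [← Finset.mul_sum]
            congr 1
            rw [Finset.sum_filter_of_ne]
            intro t _ hFne hat
            exact ha ((hFs _ _ _ hFne).2.1 hat)
        rw [step]
        rcases lt_or_eq_of_le (Nat.lt_succ_iff.1 hlt) with hℓ | hℓ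
        · rw [hFr ℓ s hsA hscard hℓ]
          have p1 : (0:ℝ) < esym r A ℓ := epos (by omega)
          have p2 : (0:ℝ) < esym r (insert a A) ℓ := Epos (by omega)
          have p3 : (0:ℝ) < esym r (insert a A) (ℓ + 1) := Epos (by omega)
          field_simp
          ring
        · have hz : esym r A (ℓ + 1) = 0 := esym_of_lt (by omega)
          have hzz : ∑ t, F ℓ s t = 0 := by
            refine Finset.sum_eq_zero fun t _ => ?_
            by_contra hne
            obtain ⟨_, htA, _, htc⟩ := hFs _ _ _ hne
            have := card_le_card htA
            omega
          rw [hz, hzz]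
          have p2 : (0:ℝ) < esym r (insert a A) ℓ := Epos (by omega)
          have p1 : (0:ℝ) < esym r A ℓ := epos (by omega)
          field_simp
          ring
    · -- column sums
      intro ℓ t htsub htc
      dsimp only
      by_cases hat : a ∈ t
      · have ht' : t.erase a ⊆ A := Finset.subset_insert_iff.1 htsub
        have ht'c : (t.erase a).card = ℓ := by
          rw [card_erase_of_mem hat, htc]
          omega
        have hWt : Wt r t = r a * Wt r (t.erase a) := by
          rw [← Wt_insert (notMem_erase a t), insert_erase hat]
        have hℓA : ℓ ≤ A.card := ht'c ▸ card_le_card ht'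
        have step2 : ∑ s, (if a ∈ s then
              (if a ∈ t ∧ 1 ≤ ℓ then
                (r a * esym r A (ℓ - 1) / esym r (insert a A) ℓ) * F (ℓ - 1) (s.erase a) (t.erase a)
              else 0)
            else if a ∈ t then
              (if s ⊆ A ∧ s.card = ℓ ∧ t = insert a s then
                (1 / esym r (insert a A) ℓ -
                  esym r A (ℓ + 1) / (esym r A ℓ * esym r (insert a A) (ℓ + 1))) * Wt r s
              else 0)
            else (esym r A (ℓ + 1) / esym r (insert a A) (ℓ + 1)) * F ℓ s t)
            = (∑ s ∈ (univ : Finset (Finset (Fin n))).filter (fun s => a ∈ s),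
                (if a ∈ t ∧ 1 ≤ ℓ then
                  (r a * esym r A (ℓ - 1) / esym r (insert a A) ℓ) * F (ℓ - 1) (s.erase a) (t.erase a)
                else 0))
              + (1 / esym r (insert a A) ℓ -
                  esym r A (ℓ + 1) / (esym r A ℓ * esym r (insert a A) (ℓ + 1))) * Wt r (t.erase a) := by
          rw [Finset.sum_ite]
          congr 1
          have e2 : ∀ s ∈ (univ : Finset (Finset (Fin n))).filter (fun s => a ∉ s),
              (if a ∈ t then
                (if s ⊆ A ∧ s.card = ℓ ∧ t = insert a s then
                  (1 / esym r (insert a A) ℓ -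
                    esym r A (ℓ + 1) / (esym r A ℓ * esym r (insert a A) (ℓ + 1))) * Wt r s
                else 0)
              else (esym r A (ℓ + 1) / esym r (insert a A) (ℓ + 1)) * F ℓ s t)
              = (if s = t.erase a then
                  (1 / esym r (insert a A) ℓ -
                    esym r A (ℓ + 1) / (esym r A ℓ * esym r (insert a A) (ℓ + 1))) * Wt r s
                else 0) := by
            intro s hs
            have has : a ∉ s := (Finset.mem_filter.1 hs).2
            rw [if_pos hat]
            by_cases hseq : s = t.erase a
            · subst hseq
              rw [if_pos ⟨ht', ht'c, (insert_erase hat).symm⟩, if_pos rfl]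
            · rw [if_neg, if_neg hseq]
              rintro ⟨_, _, hts⟩
              exact hseq (by rw [hts, erase_insert has])
          rw [Finset.sum_congr rfl e2,
            Finset.sum_ite_eq' (Finset.filter (fun s => a ∉ s) univ) (t.erase a)]
          simp
        rw [step2]
        match ℓ with
        | 0 =>
          have hfirst : ∑ s ∈ (univ : Finset (Finset (Fin n))).filter (fun s => a ∈ s),
              (if a ∈ t ∧ 1 ≤ 0 then
                (r a * esym r A (0 - 1) / esym r (insert a A) 0) * F (0 - 1) (s.erase a) (t.erase a)
              else 0) = 0 := by
            refine Finset.sum_eq_zero fun s _ => ?_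
            simp
          rw [hfirst, hWt, esym_zero, esym_zero, esym_insert ha 0, esym_zero]
          have p3 : (0:ℝ) < esym r A 1 + r a := by
            have := esym_nonneg hr A 1; nlinarith [hr a]
          rw [mul_one]
          field_simp [p3.ne']
          ring
        | (m + 1) =>
          have hfirst : ∑ s ∈ (univ : Finset (Finset (Fin n))).filter (fun s => a ∈ s),
              (if a ∈ t ∧ 1 ≤ m + 1 then
                (r a * esym r A (m + 1 - 1) / esym r (insert a A) (m + 1)) *
                  F (m + 1 - 1) (s.erase a) (t.erase a)
              else 0)
              = (r a * esym r A m / esym r (insert a A) (m + 1)) * (Wt r (t.erase a) / esym r A (m + 1)) := by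
            have e3 : ∀ s ∈ (univ : Finset (Finset (Fin n))).filter (fun s => a ∈ s),
                (if a ∈ t ∧ 1 ≤ m + 1 then
                  (r a * esym r A (m + 1 - 1) / esym r (insert a A) (m + 1)) *
                    F (m + 1 - 1) (s.erase a) (t.erase a)
                else 0)
                = (r a * esym r A m / esym r (insert a A) (m + 1)) * F m (s.erase a) (t.erase a) := by
              intro s _
              rw [if_pos ⟨hat, by omega⟩]
              norm_num
            rw [Finset.sum_congr rfl e3, ← Finset.mul_sum,
              sum_mem_erase a (fun s => F m s (t.erase a)),
              Finset.sum_filter_of_ne (by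
                intro s _ hFne hasin
                exact (Finset.notMem_erase a t) ((hFs _ _ _ hFne).1 hasin)),
              hFc m (t.erase a) ht' ht'c]
          rw [hfirst, hWt]
          have p1 : (0:ℝ) < esym r A (m + 1) := epos hℓA
          have p2 : (0:ℝ) < esym r (insert a A) (m + 1) := Epos (by omega)
          have p3 : (0:ℝ) < esym r (insert a A) (m + 2) := Epos (by omega)
          rw [esym_insert ha m, esym_insert ha (m + 1)] at *
          field_simp
          ring
      · have htA : t ⊆ A := (Finset.subset_insert_iff_of_notMem hat).1 htsub
        have e4 : ∑ s, (if a ∈ s then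
              (if a ∈ t ∧ 1 ≤ ℓ then
                (r a * esym r A (ℓ - 1) / esym r (insert a A) ℓ) * F (ℓ - 1) (s.erase a) (t.erase a)
              else 0)
            else if a ∈ t then
              (if s ⊆ A ∧ s.card = ℓ ∧ t = insert a s then
                (1 / esym r (insert a A) ℓ -
                  esym r A (ℓ + 1) / (esym r A ℓ * esym r (insert a A) (ℓ + 1))) * Wt r s
              else 0)
            else (esym r A (ℓ + 1) / esym r (insert a A) (ℓ + 1)) * F ℓ s t)
            = ∑ s, (if a ∈ s then 0
              else (esym r A (ℓ + 1) / esym r (insert a A) (ℓ + 1)) * F ℓ s t) := by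
          refine Finset.sum_congr rfl fun s _ => ?_
          by_cases has : a ∈ s
          · simp [has, hat]
          · simp [has, hat]
        rw [e4, Finset.sum_ite, Finset.sum_const, smul_zero, zero_add, ← Finset.mul_sum,
          Finset.sum_filter_of_ne (by
            intro s _ hFne hasin
            exact hat ((hFs _ _ _ hFne).1 hasin)),
          hFc ℓ t htA htc]
        have p1 : (0:ℝ) < esym r A (ℓ + 1) := epos (htc ▸ card_le_card htA)
        have p2 : (0:ℝ) < esym r (insert a A) (ℓ + 1) := Epos (by
          have := htc ▸ card_le_card htA; omega)
        field_simp



lemma chain_marginal {X : Type*} [Fintype X] [DecidableEq X] :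
    ∀ (m : ℕ) (M : ℕ → X → X → ℝ) (T : ℕ → X → ℝ) (good : ℕ → X → Prop),
    (∀ x, T 0 x ≠ 0 → good 0 x) →
    (∀ i, i < m → ∀ x, good i x → ∑ y, M i x y = 1) →
    (∀ i, i < m → ∀ x y, M i x y ≠ 0 → good (i + 1) y) →
    (∀ i, i < m → ∀ y, ∑ x, T i x * M i x y = T (i + 1) y) →
    ∀ (ℓ : ℕ) (hℓ : ℓ ≤ m) (s : X),
      ∑ c : Fin (m + 1) → X,
        (if c ⟨ℓ, Nat.lt_succ_of_le hℓ⟩ = s then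
          T 0 (c 0) * ∏ i : Fin m, M i (c i.castSucc) (c i.succ) else 0) = T ℓ s := by
  intro m
  induction m with
  | zero =>
    intro M T good hT0 hrow hprop hcol ℓ hℓ s
    interval_cases ℓ
    have h : ∀ c : Fin 1 → X, (if c ⟨0, Nat.lt_succ_of_le hℓ⟩ = s then
        T 0 (c 0) * ∏ i : Fin 0, M i (c i.castSucc) (c i.succ) else 0)
        = (if c 0 = s then T 0 (c 0) else 0) := fun c => by
      simp
    rw [Finset.sum_congr rfl (fun c _ => h c),
      Fintype.sum_equiv (Equiv.funUnique (Fin 1) X) _ (fun x => if x = s then T 0 x else 0)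
        (fun c => by simp [Equiv.funUnique]),
      Finset.sum_ite_eq' univ s (fun x => T 0 x)]
    simp
  | succ m IH =>
    intro M T good hT0 hrow hprop hcol ℓ hℓ s
    have hgood : ∀ c' : Fin (m + 1) → X,
        T 0 (c' 0) * (∏ i : Fin m, M i (c' i.castSucc) (c' i.succ)) ≠ 0 →
        good m (c' (Fin.last m)) := by
      intro c' hg
      match m with
      | 0 =>
        exact hT0 (c' 0) (mul_ne_zero_iff.1 hg).1
      | (k + 1) =>
        have hfac := Finset.prod_ne_zero_iff.1 (mul_ne_zero_iff.1 hg).2 (Fin.last k)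
          (Finset.mem_univ _)
        have := hprop k (by omega) _ _ (by simpa using hfac)
        simpa [Fin.succ_last] using this
    have hpt : ∀ (y : X) (c' : Fin (m + 1) → X),
        T 0 ((Fin.snoc c' y : Fin (m + 2) → X) 0) *
          ∏ i : Fin (m + 1), M i ((Fin.snoc c' y : Fin (m + 2) → X) i.castSucc)
            ((Fin.snoc c' y : Fin (m + 2) → X) i.succ)
        = (T 0 (c' 0) * ∏ i : Fin m, M i (c' i.castSucc) (c' i.succ)) *
            M m (c' (Fin.last m)) y := by
      intro y c'
      rw [Fin.prod_univ_castSucc]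
      have h0 : (Fin.snoc c' y : Fin (m + 2) → X) 0 = c' 0 := by
        rw [show (0 : Fin (m + 2)) = Fin.castSucc 0 from rfl, Fin.snoc_castSucc]
      have hlast : M (↑(Fin.last m)) ((Fin.snoc c' y : Fin (m + 2) → X) (Fin.last m).castSucc)
          ((Fin.snoc c' y : Fin (m + 2) → X) (Fin.last m).succ) = M m (c' (Fin.last m)) y := by
        rw [Fin.succ_last, Fin.snoc_last, Fin.snoc_castSucc, Fin.val_last]
      have hmid : ∀ i : Fin m, M (↑(i.castSucc))
          ((Fin.snoc c' y : Fin (m + 2) → X) i.castSucc.castSucc)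
          ((Fin.snoc c' y : Fin (m + 2) → X) i.castSucc.succ)
          = M i (c' i.castSucc) (c' i.succ) := by
        intro i
        rw [Fin.succ_castSucc, Fin.snoc_castSucc, Fin.snoc_castSucc, Fin.coe_castSucc]
      rw [h0, hlast, Finset.prod_congr rfl (fun i _ => hmid i), mul_assoc]
    rw [← Equiv.sum_comp (Fin.snocEquiv (fun _ : Fin (m + 2) => X)), Fintype.sum_prod_type]
    simp only [Fin.snocEquiv_apply]
    rcases eq_or_lt_of_le hℓ with rfl | hlt
    · -- ℓ = m + 1
      have hidx : (⟨m + 1, Nat.lt_succ_of_le hℓ⟩ : Fin (m + 2)) = Fin.last (m + 1) := rfl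
      have e1 : ∀ (y : X) (c' : Fin (m + 1) → X),
          (if (Fin.snoc c' y : Fin (m + 2) → X) ⟨m + 1, Nat.lt_succ_of_le hℓ⟩ = s then
            T 0 ((Fin.snoc c' y : Fin (m + 2) → X) 0) *
              ∏ i : Fin (m + 1), M i ((Fin.snoc c' y : Fin (m + 2) → X) i.castSucc)
                ((Fin.snoc c' y : Fin (m + 2) → X) i.succ) else 0)
          = (if y = s then (T 0 (c' 0) * ∏ i : Fin m, M i (c' i.castSucc) (c' i.succ)) *
              M m (c' (Fin.last m)) y else 0) := by
        intro y c'
        rw [hidx, Fin.snoc_last, hpt]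
      rw [Finset.sum_congr rfl fun y _ => Finset.sum_congr rfl fun c' _ => e1 y c']
      have e2 : ∀ y : X, (∑ c' : Fin (m + 1) → X, if y = s then
          (T 0 (c' 0) * ∏ i : Fin m, M i (c' i.castSucc) (c' i.succ)) *
            M m (c' (Fin.last m)) y else 0)
          = (if y = s then (∑ c' : Fin (m + 1) → X,
            (T 0 (c' 0) * ∏ i : Fin m, M i (c' i.castSucc) (c' i.succ)) *
              M m (c' (Fin.last m)) y) else 0) := by
        intro y; split_ifs <;> simp
      rw [Finset.sum_congr rfl fun y _ => e2 y,
        Finset.sum_ite_eq' univ s]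
      simp only [Finset.mem_univ, if_true]
      have e3 : ∀ c' : Fin (m + 1) → X,
          (T 0 (c' 0) * ∏ i : Fin m, M i (c' i.castSucc) (c' i.succ)) * M m (c' (Fin.last m)) s
          = ∑ x : X, (if c' (Fin.last m) = x then
              (T 0 (c' 0) * ∏ i : Fin m, M i (c' i.castSucc) (c' i.succ)) * M m x s else 0) := by
        intro c'
        rw [Finset.sum_ite_eq univ (c' (Fin.last m))
          (fun x => (T 0 (c' 0) * ∏ i : Fin m, M i (c' i.castSucc) (c' i.succ)) * M m x s)]
        simp
      rw [Finset.sum_congr rfl fun c' _ => e3 c', Finset.sum_comm]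
      have e4 : ∀ x : X, (∑ c' : Fin (m + 1) → X, if c' (Fin.last m) = x then
          (T 0 (c' 0) * ∏ i : Fin m, M i (c' i.castSucc) (c' i.succ)) * M m x s else 0)
          = T m x * M m x s := by
        intro x
        have : ∀ c' : Fin (m + 1) → X, (if c' (Fin.last m) = x then
            (T 0 (c' 0) * ∏ i : Fin m, M i (c' i.castSucc) (c' i.succ)) * M m x s else 0)
            = (if c' ⟨m, Nat.lt_succ_of_le (le_refl m)⟩ = x then
              T 0 (c' 0) * ∏ i : Fin m, M i (c' i.castSucc) (c' i.succ) else 0) * M m x s := by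
          intro c'
          have : (⟨m, Nat.lt_succ_of_le (le_refl m)⟩ : Fin (m + 1)) = Fin.last m := rfl
          rw [this, ite_mul, zero_mul]
        rw [Finset.sum_congr rfl fun c' _ => this c', ← Finset.sum_mul,
          IH M T good hT0 (fun i hi => hrow i (by omega)) (fun i hi => hprop i (by omega))
            (fun i hi => hcol i (by omega)) m (le_refl m) x]
      rw [Finset.sum_congr rfl fun x _ => e4 x, hcol m (by omega) s]
    · -- ℓ ≤ m
      have hlm : ℓ ≤ m := by omega
      have hidx : (⟨ℓ, Nat.lt_succ_of_le hℓ⟩ : Fin (m + 2))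
          = Fin.castSucc ⟨ℓ, Nat.lt_succ_of_le hlm⟩ := rfl
      have e1 : ∀ (y : X) (c' : Fin (m + 1) → X),
          (if (Fin.snoc c' y : Fin (m + 2) → X) ⟨ℓ, Nat.lt_succ_of_le hℓ⟩ = s then
            T 0 ((Fin.snoc c' y : Fin (m + 2) → X) 0) *
              ∏ i : Fin (m + 1), M i ((Fin.snoc c' y : Fin (m + 2) → X) i.castSucc)
                ((Fin.snoc c' y : Fin (m + 2) → X) i.succ) else 0)
          = (if c' ⟨ℓ, Nat.lt_succ_of_le hlm⟩ = s then
              (T 0 (c' 0) * ∏ i : Fin m, M i (c' i.castSucc) (c' i.succ)) *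
                M m (c' (Fin.last m)) y else 0) := by
        intro y c'
        rw [hidx, Fin.snoc_castSucc, hpt]
      rw [Finset.sum_congr rfl fun y _ => Finset.sum_congr rfl fun c' _ => e1 y c',
        Finset.sum_comm]
      have e2 : ∀ c' : Fin (m + 1) → X, (∑ y : X, if c' ⟨ℓ, Nat.lt_succ_of_le hlm⟩ = s then
          (T 0 (c' 0) * ∏ i : Fin m, M i (c' i.castSucc) (c' i.succ)) *
            M m (c' (Fin.last m)) y else 0)
          = (if c' ⟨ℓ, Nat.lt_succ_of_le hlm⟩ = s then
              T 0 (c' 0) * ∏ i : Fin m, M i (c' i.castSucc) (c' i.succ) else 0) := by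
        intro c'
        split_ifs with hc
        · rw [← Finset.mul_sum]
          rcases eq_or_ne (T 0 (c' 0) * ∏ i : Fin m, M i (c' i.castSucc) (c' i.succ)) 0 with h0 | h0
          · rw [h0, zero_mul]
          · rw [hrow m (by omega) _ (hgood c' h0), mul_one]
        · simp
      rw [Finset.sum_congr rfl fun c' _ => e2 c',
        IH M T good hT0 (fun i hi => hrow i (by omega)) (fun i hi => hprop i (by omega))
          (fun i hi => hcol i (by omega)) ℓ hlm s]

/-- **Coupled sampling of a maximal chain.**  For a non-trivial product distribution
`P` on `{0,1}^n` there is a probability distribution `μ` on maximal chains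
`∅ = c_0 ⊂ c_1 ⊂ ⋯ ⊂ c_n = [n]` (with `|c_ℓ| = ℓ`) whose `ℓ`-th marginal is `P_ℓ`,
the distribution of `z ∼ P` conditioned on `|z| = ℓ`, for every `ℓ`. -/
theorem exists_chain_distribution (n : ℕ) (p : Fin n → ℝ)
    (hp : ∀ j, 0 < p j ∧ p j < 1) :
    ∃ μ : (Fin (n + 1) → Finset (Fin n)) → ℝ,
      (∀ c, 0 ≤ μ c) ∧
      (∑ c, μ c = 1) ∧
      (∀ c, μ c ≠ 0 →
        c 0 = ∅ ∧ c (Fin.last n) = Finset.univ ∧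
        (∀ i : Fin n, c i.castSucc ⊂ c i.succ) ∧
        (∀ ℓ : Fin (n + 1), (c ℓ).card = (ℓ : ℕ))) ∧
      (∀ (ℓ : Fin (n + 1)) (s : Finset (Fin n)),
        ∑ c ∈ Finset.univ.filter (fun c : Fin (n + 1) → Finset (Fin n) => c ℓ = s), μ c
          = condWeight p (ℓ : ℕ) s) := by
  have hp1 : ∀ j, (0:ℝ) < 1 - p j := fun j => by linarith [(hp j).2]
  set r : Fin n → ℝ := fun j => p j / (1 - p j) with hrdef
  have hr : ∀ j, 0 < r j := fun j => div_pos (hp j).1 (hp1 j)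
  have hcu : (univ : Finset (Fin n)).card = n := by simp
  obtain ⟨F, hF0, hFs, hFr, hFc⟩ := flow_exists hr univ
  have hepos : ∀ {k : ℕ}, k ≤ n → 0 < esym r univ k := fun {k} hk =>
    esym_pos hr (by rwa [hcu])
  set M : ℕ → Finset (Fin n) → Finset (Fin n) → ℝ :=
    fun i s t => F i s t * esym r univ i / Wt r s with hM
  set T : ℕ → Finset (Fin n) → ℝ :=
    fun i s => if s.card = i then Wt r s / esym r univ i else 0 with hT
  have hMF : ∀ (i : ℕ) (s t : Finset (Fin n)), M i s t ≠ 0 → F i s t ≠ 0 := by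
    intro i s t h h0
    exact h (by simp [hM, h0])
  have hT0 : ∀ s : Finset (Fin n), T 0 s ≠ 0 → s.card = 0 := by
    intro s h
    by_contra h0
    exact h (by simp [hT, h0])
  have hrow : ∀ i, i < n → ∀ s : Finset (Fin n), s.card = i → ∑ t, M i s t = 1 := by
    intro i hi s hc
    have : ∑ t, M i s t = (∑ t, F i s t) * esym r univ i / Wt r s := by
      simp only [hM]
      rw [Finset.sum_mul, Finset.sum_div]
    rw [this, hFr i s (Finset.subset_univ s) hc (by rwa [hcu])]
    field_simp [(hepos hi.le).ne', (Wt_pos hr s).ne']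
  have hprop : ∀ i, i < n → ∀ s t : Finset (Fin n), M i s t ≠ 0 → t.card = i + 1 :=
    fun i _ s t h => (hFs i s t (hMF i s t h)).2.2.2
  have hcol : ∀ i, i < n → ∀ t : Finset (Fin n), ∑ s, T i s * M i s t = T (i + 1) t := by
    intro i hi t
    have hTM : ∀ s, T i s * M i s t = F i s t := by
      intro s
      by_cases hc : s.card = i
      · simp only [hT, hM, if_pos hc]
        field_simp [(hepos hi.le).ne', (Wt_pos hr s).ne']
      · simp only [hT, if_neg hc, zero_mul]
        rcases eq_or_ne (F i s t) 0 with h0 | h0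
        · rw [h0]
        · exact absurd (hFs i s t h0).2.2.1 hc
    rw [Finset.sum_congr rfl fun s _ => hTM s]
    by_cases hc : t.card = i + 1
    · rw [hFc i t (Finset.subset_univ t) hc]
      simp only [hT, if_pos hc]
    · have hz : ∑ u : Finset (Fin n), F i u t = 0 := by
        refine Finset.sum_eq_zero fun u _ => ?_
        rcases eq_or_ne (F i u t) 0 with h0 | h0
        · exact h0
        · exact absurd (hFs i u t h0).2.2.2 hc
      rw [hz]
      simp only [hT, if_neg hc]
  have key : ∀ (ℓ : ℕ) (hℓ : ℓ ≤ n) (s : Finset (Fin n)),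
      ∑ c : Fin (n + 1) → Finset (Fin n),
        (if c ⟨ℓ, Nat.lt_succ_of_le hℓ⟩ = s then
          T 0 (c 0) * ∏ i : Fin n, M i (c i.castSucc) (c i.succ) else 0) = T ℓ s :=
    chain_marginal n M T (fun i s => s.card = i) hT0 hrow hprop hcol
  have hC : (0:ℝ) < ∏ j, (1 - p j) := Finset.prod_pos fun j _ => hp1 j
  have hpw : ∀ u : Finset (Fin n), prodWeight p u = Wt r u * ∏ j, (1 - p j) := by
    intro u
    rw [prodWeight, Wt, ← Finset.prod_mul_prod_compl u (fun j => 1 - p j), ← mul_assoc]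
    congr 1
    rw [← Finset.prod_mul_distrib]
    refine Finset.prod_congr rfl fun j _ => ?_
    exact (div_mul_cancel₀ (p j) (hp1 j).ne').symm
  have hcond : ∀ (ℓ : ℕ) (s : Finset (Fin n)), condWeight p ℓ s = T ℓ s := by
    intro ℓ s
    have hsum : ∑ u ∈ univ.filter (fun u : Finset (Fin n) => u.card = ℓ), prodWeight p u
        = esym r univ ℓ * ∏ j, (1 - p j) := by
      rw [esym, Finset.sum_mul]
      have hps : Finset.powersetCard ℓ (univ : Finset (Fin n))
          = univ.filter (fun u : Finset (Fin n) => u.card = ℓ) := by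
        rw [Finset.powersetCard_eq_filter, Finset.powerset_univ]
      rw [hps]
      exact Finset.sum_congr rfl fun u _ => hpw u
    simp only [condWeight, hsum, hT]
    by_cases hcard : s.card = ℓ
    · rw [if_pos hcard, if_pos hcard, hpw, mul_div_mul_right _ _ hC.ne']
    · rw [if_neg hcard, if_neg hcard, zero_div]
  refine ⟨fun c => T 0 (c 0) * ∏ i : Fin n, M i (c i.castSucc) (c i.succ), ?_, ?_, ?_, ?_⟩
  · -- nonnegativity
    intro c
    refine mul_nonneg ?_ (Finset.prod_nonneg fun i _ => ?_)
    · simp only [hT]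
      split_ifs
      · exact div_nonneg (Wt_pos hr _).le (esym_nonneg hr _ _)
      · exact le_rfl
    · simp only [hM]
      exact div_nonneg (mul_nonneg (hF0 _ _ _) (esym_nonneg hr _ _)) (Wt_pos hr _).le
  · -- sums to one
    have hfib : ∑ c : Fin (n + 1) → Finset (Fin n),
        (T 0 (c 0) * ∏ i : Fin n, M i (c i.castSucc) (c i.succ))
        = ∑ s : Finset (Fin n), ∑ c : Fin (n + 1) → Finset (Fin n),
            (if c ⟨n, Nat.lt_succ_of_le le_rfl⟩ = s then
              T 0 (c 0) * ∏ i : Fin n, M i (c i.castSucc) (c i.succ) else 0) := by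
      rw [Finset.sum_comm]
      refine Finset.sum_congr rfl fun c _ => ?_
      rw [Finset.sum_ite_eq univ (c ⟨n, Nat.lt_succ_of_le le_rfl⟩)
        (fun _ => T 0 (c 0) * ∏ i : Fin n, M i (c i.castSucc) (c i.succ))]
      simp
    rw [hfib, Finset.sum_congr rfl fun s _ => key n le_rfl s]
    have huniv : ∀ s : Finset (Fin n), s.card = n ↔ s = univ := by
      intro s
      constructor
      · intro h
        exact Finset.eq_univ_of_card s (h.trans (Fintype.card_fin n).symm)
      · intro h
        rw [h, hcu]
    have hTn : ∀ s : Finset (Fin n), T n s = if s = univ then Wt r s / esym r univ n else 0 := by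
      intro s
      simp only [hT]
      by_cases h : s = univ
      · rw [if_pos ((huniv s).2 h), if_pos h]
      · rw [if_neg (fun hc => h ((huniv s).1 hc)), if_neg h]
    rw [Finset.sum_congr rfl fun s _ => hTn s, Finset.sum_ite_eq' univ univ
      (fun s => Wt r s / esym r univ n)]
    have hesymn : esym r univ n = Wt r univ := by
      have h1 : Finset.powersetCard n (univ : Finset (Fin n)) = {univ} := by
        have := Finset.powersetCard_self (univ : Finset (Fin n))
        rwa [Finset.card_univ, Fintype.card_fin] at this
      rw [esym, h1, Finset.sum_singleton]
    simp [hesymn, div_self (Wt_pos hr univ).ne']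
  · -- support
    intro c hc
    obtain ⟨hT0c, hprodc⟩ := mul_ne_zero_iff.1 hc
    have hc0 : c 0 = ∅ := Finset.card_eq_zero.1 (hT0 _ hT0c)
    have hfac : ∀ i : Fin n, F i (c i.castSucc) (c i.succ) ≠ 0 := by
      intro i
      have hMne := Finset.prod_ne_zero_iff.1 hprodc i (Finset.mem_univ _)
      exact hMF _ _ _ hMne
    have hsupp := fun i : Fin n => hFs i _ _ (hfac i)
    have hcards : ∀ ℓ : Fin (n + 1), (c ℓ).card = (ℓ : ℕ) := by
      intro ℓ
      rcases Fin.eq_castSucc_or_eq_last ℓ with ⟨i, rfl⟩ | rfl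
      · exact (hsupp i).2.2.1
      · match n, c, hc0, hsupp with
        | 0, c, hc0, _ => simpa [show (Fin.last 0) = 0 from rfl] using congrArg Finset.card hc0
        | (k + 1), c, _, hsupp =>
          have h1 := (hsupp (Fin.last k)).2.2.2
          rw [Fin.succ_last] at h1
          simpa using h1
    refine ⟨hc0, ?_, ?_, hcards⟩
    · apply Finset.eq_univ_of_card
      rw [hcards (Fin.last n)]
      simp
    · intro i
      refine HasSubset.Subset.ssubset_of_ne (hsupp i).1 ?_
      intro heq
      have h1 := (hsupp i).2.2.1
      have h2 := (hsupp i).2.2.2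
      rw [heq, h2] at h1
      omega
  · -- marginals
    intro ℓ s
    rw [Finset.sum_filter]
    have hidx : (⟨(ℓ : ℕ), Nat.lt_succ_of_le (Nat.lt_succ_iff.1 ℓ.isLt)⟩ : Fin (n + 1)) = ℓ :=
      Fin.eta ℓ _
    have hkey := key (ℓ : ℕ) (Nat.lt_succ_iff.1 ℓ.isLt) s
    rw [hidx] at hkey
    rw [hcond]
    exact hkey
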